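/- Fix a real α > 1 and a real t ≥ 0. With I_d(t) = ∫_1^d k^{−α}(1 − k^{−α})^t dk and H_{d,α} = Σ_{k=1}^d k^{−α}, one has lim_{d→∞} I_d(t) / H_{d,α} = B(1 − 1/α, 1 + t) / (α·ζ(α)), where B(a, b) = ∫_0^1 z^{a−1}(1 − z)^{b−1} dz is the Beta function and ζ is the Riemann zeta function. -/

import Mathlib

set_option maxHeartbeats 1000000

open Filter MeasureTheory

open Real Set intervalIntegral in
/-- α > 1 case of the integral asymptotics:
`I_d(t)/H_{d,α} → B(1 − 1/α, 1 + t)/(α·ζ(α))`, with the Beta function written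
as the integral `∫_0^1 z^{a−1}(1−z)^{b−1} dz`. -/
theorem stmt6 (α t : ℝ) (hα : 1 < α) (ht : 0 ≤ t) :
    Tendsto
      (fun d : ℕ =>
        (∫ k in (1 : ℝ)..(d : ℝ), k ^ (-α) * (1 - k ^ (-α)) ^ t) /
        (∑ k ∈ Finset.Icc 1 d, (k : ℝ) ^ (-α)))
      atTop
      (nhds ((∫ z in (0 : ℝ)..1, z ^ ((1 - 1 / α) - 1) * (1 - z) ^ ((1 + t) - 1)) /
        (α * (riemannZeta (α : ℂ)).re))) := by
  have hα0 : (0:ℝ) < α := lt_trans one_pos hα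
  have e1 : (1 - 1/α : ℝ) - 1 = -(1/α) := by ring
  have e2 : (1 + t : ℝ) - 1 = t := by ring
  rw [e1, e2]
  set g : ℝ → ℝ := fun z => z ^ (-(1/α)) * (1 - z) ^ t with hgdef
  set B : ℝ := ∫ z in (0:ℝ)..1, g z with hBdef
  -- basic exponent fact
  have hexp : (-1:ℝ) < -(1/α) := by
    have h1 : 1/α < 1 := by rw [div_lt_one hα0]; exact hα
    linarith
  -- g is integrable on Icc 0 1
  have hgmeas : Measurable g := by
    exact (measurable_id.pow_const _).mul ((measurable_const.sub measurable_id).pow_const _)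
  have hdomint : IntegrableOn (fun z : ℝ => z ^ (-(1/α))) (Ioc (0:ℝ) 1) := by
    have := intervalIntegral.intervalIntegrable_rpow' (a := 0) (b := 1) hexp
    rwa [intervalIntegrable_iff_integrableOn_Ioc_of_le zero_le_one] at this
  have hgIoc : IntegrableOn g (Ioc (0:ℝ) 1) := by
    refine Integrable.mono hdomint hgmeas.aestronglyMeasurable ?_
    refine (ae_restrict_iff' measurableSet_Ioc).mpr (ae_of_all _ fun z hz => ?_)
    have hz0 : 0 < z := hz.1
    have hz1 : z ≤ 1 := hz.2
    have h1 : 0 ≤ z ^ (-(1/α)) := rpow_nonneg hz0.le _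
    have h2 : 0 ≤ (1 - z) ^ t := rpow_nonneg (by linarith) _
    have h3 : (1 - z) ^ t ≤ 1 := rpow_le_one (by linarith) (by linarith) ht
    rw [Real.norm_eq_abs, Real.norm_eq_abs, abs_of_nonneg (mul_nonneg h1 h2),
      abs_of_nonneg h1]
    calc z ^ (-(1/α)) * (1 - z) ^ t ≤ z ^ (-(1/α)) * 1 := by
          exact mul_le_mul_of_nonneg_left h3 h1
      _ = z ^ (-(1/α)) := mul_one _
  have hgIcc : IntegrableOn g (Icc (0:ℝ) 1) :=
    (integrableOn_Icc_iff_integrableOn_Ioc).mpr hgIoc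
  -- continuity of c ↦ ∫ c..1 g at 0 within Icc 0 1
  have hgUIcc : IntegrableOn g (uIcc (0:ℝ) 1) := by rwa [uIcc_of_le zero_le_one]
  have hFcont : ContinuousOn (fun c => ∫ z in c..1, g z) (uIcc (0:ℝ) 1) :=
    intervalIntegral.continuousOn_primitive_interval_left hgUIcc
  have hF0 : Tendsto (fun c => ∫ z in c..1, g z) (nhdsWithin 0 (Icc (0:ℝ) 1)) (nhds B) := by
    have := (hFcont 0 (by rw [uIcc_of_le zero_le_one]; exact ⟨le_rfl, zero_le_one⟩))
    rw [uIcc_of_le zero_le_one] at this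
    exact this
  -- the sequence c_d = d^(-α) tends to 0 within Icc 0 1
  have hcseq : Tendsto (fun d : ℕ => (d:ℝ) ^ (-α)) atTop (nhdsWithin 0 (Icc (0:ℝ) 1)) := by
    rw [tendsto_nhdsWithin_iff]
    constructor
    · exact (tendsto_rpow_neg_atTop hα0).comp tendsto_natCast_atTop_atTop
    · filter_upwards [eventually_ge_atTop 1] with d hd
      have hd1 : (1:ℝ) ≤ (d:ℝ) := by exact_mod_cast hd
      exact ⟨rpow_nonneg (by linarith) _,
        rpow_le_one_of_one_le_of_nonpos hd1 (by linarith)⟩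
  -- numerator limit
  have hNum : Tendsto (fun d : ℕ =>
      ∫ k in (1:ℝ)..(d:ℝ), k ^ (-α) * (1 - k ^ (-α)) ^ t) atTop (nhds (B / α)) := by
    have key : ∀ d : ℕ, 1 ≤ d →
        (∫ k in (1:ℝ)..(d:ℝ), k ^ (-α) * (1 - k ^ (-α)) ^ t)
          = (∫ z in ((d:ℝ) ^ (-α))..1, g z) / α := by
      intro d hd
      have hd1 : (1:ℝ) ≤ (d:ℝ) := by exact_mod_cast hd
      have hsub : (∫ x in (1:ℝ)..(d:ℝ), (-α * x ^ (-α - 1)) • (g ∘ (fun x : ℝ => x ^ (-α))) x)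
          = ∫ u in ((1:ℝ) ^ (-α))..((d:ℝ) ^ (-α)), g u := by
        apply intervalIntegral.integral_comp_smul_deriv''
          (f := fun x : ℝ => x ^ (-α)) (f' := fun x : ℝ => -α * x ^ (-α - 1))
        · intro x hx
          rw [uIcc_of_le hd1] at hx
          have hx0 : (0:ℝ) < x := lt_of_lt_of_le one_pos hx.1
          exact ((Real.continuousAt_rpow_const x (-α) (Or.inl hx0.ne')).continuousWithinAt)
        · intro x hx
          rw [min_eq_left hd1, max_eq_right hd1] at hx
          have hx0 : x ≠ 0 := by
            have : (1:ℝ) < x := hx.1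
            linarith
          exact ((Real.hasDerivAt_rpow_const (p := -α) (Or.inl hx0))).hasDerivWithinAt
        · intro x hx
          rw [uIcc_of_le hd1] at hx
          have hx0 : (0:ℝ) < x := lt_of_lt_of_le one_pos hx.1
          exact continuousWithinAt_const.mul
            ((Real.continuousAt_rpow_const x (-α - 1) (Or.inl hx0.ne')).continuousWithinAt)
        · intro z hz
          obtain ⟨x, hx, rfl⟩ := hz
          rw [uIcc_of_le hd1] at hx
          have hx0 : (0:ℝ) < x := lt_of_lt_of_le one_pos hx.1
          have hz0 : (0:ℝ) < x ^ (-α) := rpow_pos_of_pos hx0 _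
          apply ContinuousWithinAt.mono _ (subset_univ _)
          apply ContinuousAt.continuousWithinAt
          exact ((Real.continuousAt_rpow_const _ (-(1/α)) (Or.inl hz0.ne'))).mul
            (((continuous_const.sub continuous_id).continuousAt).rpow_const (Or.inr ht))
      -- identify integrands on [1, d]
      have heq : (∫ x in (1:ℝ)..(d:ℝ), (-α * x ^ (-α - 1)) • (g ∘ (fun x : ℝ => x ^ (-α))) x)
          = ∫ x in (1:ℝ)..(d:ℝ), (-α) * (x ^ (-α) * (1 - x ^ (-α)) ^ t) := by
        apply intervalIntegral.integral_congr
        intro x hx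
        rw [uIcc_of_le hd1] at hx
        have hx0 : (0:ℝ) < x := lt_of_lt_of_le one_pos hx.1
        have h1 : (x ^ (-α)) ^ (-(1/α)) = x := by
          rw [← Real.rpow_mul hx0.le]
          have : (-α) * (-(1/α)) = 1 := by field_simp
          rw [this, Real.rpow_one]
        have h2 : x ^ (-α - 1) * x = x ^ (-α) := by
          rw [← Real.rpow_add_one hx0.ne' (-α - 1)]
          norm_num
        simp only [Function.comp_apply, smul_eq_mul, hgdef, h1]
        rw [← h2]
        ring
      rw [heq] at hsub
      rw [intervalIntegral.integral_const_mul] at hsub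
      rw [Real.one_rpow] at hsub
      rw [intervalIntegral.integral_symm ((d:ℝ) ^ (-α)) 1] at hsub
      rw [eq_div_iff hα0.ne']
      linarith [hsub]
    refine Tendsto.congr' ?_ ((hF0.comp hcseq).div_const α)
    filter_upwards [eventually_ge_atTop 1] with d hd
    exact (key d hd).symm
  -- denominator limit
  have hsum : Summable (fun n : ℕ => (n:ℝ) ^ (-α)) := by
    rw [Real.summable_nat_rpow]
    linarith
  have hzre : (riemannZeta (α : ℂ)).re = ∑' n : ℕ, (n:ℝ) ^ (-α) := by
    rw [zeta_eq_tsum_one_div_nat_cpow (by simp [hα])]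
    have hterm : ∀ n : ℕ, (1 / (n:ℂ) ^ (α:ℂ)) = (((n:ℝ) ^ (-α) : ℝ) : ℂ) := by
      intro n
      rcases Nat.eq_zero_or_pos n with h | h
      · subst h
        simp [Complex.zero_cpow (by exact_mod_cast hα0.ne' : (α:ℂ) ≠ 0),
          Real.zero_rpow (by linarith : -α ≠ 0)]
      · have hn0 : (0:ℝ) ≤ (n:ℝ) := Nat.cast_nonneg n
        rw [Real.rpow_neg hn0, Complex.ofReal_inv, Complex.ofReal_cpow hn0, one_div]
        norm_num
    rw [tsum_congr hterm]
    rw [← Complex.ofReal_tsum]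
    simp
  have hDen : Tendsto (fun d : ℕ => ∑ k ∈ Finset.Icc 1 d, (k:ℝ) ^ (-α)) atTop
      (nhds ((riemannZeta (α : ℂ)).re)) := by
    rw [hzre]
    have h0 : ((0:ℕ):ℝ) ^ (-α) = 0 := by
      simp [Real.zero_rpow (by linarith : -α ≠ 0)]
    have hIcc : ∀ d : ℕ, (∑ k ∈ Finset.Icc 1 d, (k:ℝ) ^ (-α))
        = ∑ k ∈ Finset.range (d+1), (k:ℝ) ^ (-α) := by
      intro d
      rw [Finset.range_eq_Ico, Finset.sum_eq_sum_Ico_succ_bot (Nat.succ_pos d)]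
      rw [h0, zero_add]
      congr 1
    simp_rw [hIcc]
    exact (hsum.hasSum.tendsto_sum_nat.comp (tendsto_add_atTop_nat 1))
  -- zeta re positive
  have hzpos : (0:ℝ) < (riemannZeta (α : ℂ)).re := by
    rw [hzre]
    have h1 : (1:ℝ) ≤ ∑' n : ℕ, (n:ℝ) ^ (-α) := by
      have := hsum.le_tsum 1 (fun i _ => rpow_nonneg (Nat.cast_nonneg i) _)
      simpa using this
    linarith
  rw [← div_div]
  exact hNum.div hDen hzpos.ne'
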